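/- Let F₃(x,t) = x¹² + (6t² + 98/3)x¹⁰ + (15t⁴ + 230t² + 245/3)x⁸ + (20t⁶ + (1540/3)t⁴ + (18620/9)t² + 75460/81)x⁶ + (15t⁸ + (1460/3)t⁶ + (37450/9)t⁴ + (24500/3)t² − 5187875/243)x⁴ + (6t¹⁰ + 190t⁸ + (35420/9)t⁶ − (4900/9)t⁴ + (188650/27)t² + 159786550/729)x² + t¹² + (58/3)t¹⁰ + (1445/3)t⁸ + (798980/81)t⁶ + (16391725/243)t⁴ + (300896750/729)t² + 878826025/6561, let P₂(x,t) = 5x⁶ − (5t² − 35)x⁴ − (9t⁴ + (190/3)t² + 665/9)x² + t⁶ − (7/3)t⁴ − (245/9)t² + 18865/81, and let Q₂(x,t) = x⁶ − (9t² − 13/3)x⁴ − (5t⁴ + (230/3)t² + 245/9)x² + 5t⁶ + 15t⁴ + (535/9)t² + 12005/81. Then for all real parameters α and β, the polynomial F̃₃(x,t;α,β) = F₃(x,t) + 2αt·P₂(x,t) + 2βx·Q₂(x,t) + (α² + β²)(x² + t² + 1) satisfies, as a function of (x,t) ∈ ℝ², the bilinear Boussinesq equation F·F_tt − (F_t)²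 + F·F_xx − (F_x)² − (1/3)(F·F_xxxx − 4·F_x·F_xxx + 3·(F_xx)²) = 0. -/

import Mathlib

/-- Partial derivative in the first (space) variable. -/
noncomputable def dX (f : ℝ → ℝ → ℝ) : ℝ → ℝ → ℝ := fun x t => deriv (fun x' => f x' t) x

/-- Partial derivative in the second (time) variable. -/
noncomputable def dT (f : ℝ → ℝ → ℝ) : ℝ → ℝ → ℝ := fun x t => deriv (fun t' => f x t') t

/-- The bilinear Boussinesq equation
`F·F_tt − (F_t)² + F·F_xx − (F_x)² − (1/3)(F·F_xxxx − 4 F_x F_xxx + 3 (F_xx)²) = 0`. -/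
def IsBilinearBQSolution (F : ℝ → ℝ → ℝ) : Prop :=
  ∀ x t : ℝ,
    F x t * dT (dT F) x t - (dT F x t) ^ 2 + F x t * dX (dX F) x t - (dX F x t) ^ 2
      - (1 / 3) * (F x t * dX (dX (dX (dX F))) x t
          - 4 * dX F x t * dX (dX (dX F)) x t + 3 * (dX (dX F) x t) ^ 2) = 0

/-- The polynomial `F₃(x,t)`. -/
noncomputable def F3 (x t : ℝ) : ℝ :=
  x ^ 12 + (6 * t ^ 2 + 98 / 3) * x ^ 10 + (15 * t ^ 4 + 230 * t ^ 2 + 245 / 3) * x ^ 8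
    + (20 * t ^ 6 + (1540 / 3) * t ^ 4 + (18620 / 9) * t ^ 2 + 75460 / 81) * x ^ 6
    + (15 * t ^ 8 + (1460 / 3) * t ^ 6 + (37450 / 9) * t ^ 4 + (24500 / 3) * t ^ 2
        - 5187875 / 243) * x ^ 4
    + (6 * t ^ 10 + 190 * t ^ 8 + (35420 / 9) * t ^ 6 - (4900 / 9) * t ^ 4
        + (188650 / 27) * t ^ 2 + 159786550 / 729) * x ^ 2
    + t ^ 12 + (58 / 3) * t ^ 10 + (1445 / 3) * t ^ 8 + (798980 / 81) * t ^ 6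
    + (16391725 / 243) * t ^ 4 + (300896750 / 729) * t ^ 2 + 878826025 / 6561

/-- The polynomial `P₂(x,t)`. -/
noncomputable def P2 (x t : ℝ) : ℝ :=
  5 * x ^ 6 - (5 * t ^ 2 - 35) * x ^ 4 - (9 * t ^ 4 + (190 / 3) * t ^ 2 + 665 / 9) * x ^ 2
    + t ^ 6 - (7 / 3) * t ^ 4 - (245 / 9) * t ^ 2 + 18865 / 81

/-- The polynomial `Q₂(x,t)`. -/
noncomputable def Q2 (x t : ℝ) : ℝ :=
  x ^ 6 - (9 * t ^ 2 - 13 / 3) * x ^ 4 - (5 * t ^ 4 + (230 / 3) * t ^ 2 + 245 / 9) * x ^ 2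
    + 5 * t ^ 6 + 15 * t ^ 4 + (535 / 9) * t ^ 2 + 12005 / 81

noncomputable def cXc (α β t : ℝ) : ℕ → ℝ := fun i =>
  if i = 0 then (1 * t ^ 12 + (58 / 3) * t ^ 10 + (1445 / 3) * t ^ 8 + 2 * t ^ 7 * α + (798980 / 81) * t ^ 6 + (-14 / 3) * t ^ 5 * α + (16391725 / 243) * t ^ 4 + (-490 / 9) * t ^ 3 * α + 1 * t ^ 2 * α ^ 2 + 1 * t ^ 2 * β ^ 2 + (300896750 / 729) * t ^ 2 + (37730 / 81) * t * α + 1 * α ^ 2 + 1 * β ^ 2 + (878826025 / 6561))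
  else   if i = 1 then (10 * t ^ 6 * β + 30 * t ^ 4 * β + (1070 / 9) * t ^ 2 * β + (24010 / 81) * β)
  else   if i = 2 then (6 * t ^ 10 + 190 * t ^ 8 + (35420 / 9) * t ^ 6 + (-18) * t ^ 5 * α + (-4900 / 9) * t ^ 4 + (-380 / 3) * t ^ 3 * α + (188650 / 27) * t ^ 2 + (-1330 / 9) * t * α + 1 * α ^ 2 + 1 * β ^ 2 + (159786550 / 729))
  else   if i = 3 then ((-10) * t ^ 4 * β + (-460 / 3) * t ^ 2 * β + (-490 / 9) * β)
  else   if i = 4 then (15 * t ^ 8 + (1460 / 3) * t ^ 6 + (37450 / 9) * t ^ 4 + (-10) * t ^ 3 * α + (24500 / 3) * t ^ 2 + 70 * t * α + (-5187875 / 243))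
  else   if i = 5 then ((-18) * t ^ 2 * β + (26 / 3) * β)
  else   if i = 6 then (20 * t ^ 6 + (1540 / 3) * t ^ 4 + (18620 / 9) * t ^ 2 + 10 * t * α + (75460 / 81))
  else   if i = 7 then (2 * β)
  else   if i = 8 then (15 * t ^ 4 + 230 * t ^ 2 + (245 / 3))
  else   if i = 10 then (6 * t ^ 2 + (98 / 3))
  else   if i = 12 then (1)
  else 0

noncomputable def cTc (α β x : ℝ) : ℕ → ℝ := fun i =>
  if i = 0 then (1 * x ^ 12 + (98 / 3) * x ^ 10 + (245 / 3) * x ^ 8 + 2 * x ^ 7 * β + (75460 / 81) * x ^ 6 + (26 / 3) * x ^ 5 * β + (-5187875 / 243) * x ^ 4 + (-490 / 9) * x ^ 3 * β + 1 * x ^ 2 * α ^ 2 + 1 * x ^ 2 * β ^ 2 + (159786550 / 729) * x ^ 2 + (24010 / 81) * x * β + 1 * α ^ 2 + 1 * β ^ 2 + (878826025 / 6561))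
  else   if i = 1 then (10 * x ^ 6 * α + 70 * x ^ 4 * α + (-1330 / 9) * x ^ 2 * α + (37730 / 81) * α)
  else   if i = 2 then (6 * x ^ 10 + 230 * x ^ 8 + (18620 / 9) * x ^ 6 + (-18) * x ^ 5 * β + (24500 / 3) * x ^ 4 + (-460 / 3) * x ^ 3 * β + (188650 / 27) * x ^ 2 + (1070 / 9) * x * β + 1 * α ^ 2 + 1 * β ^ 2 + (300896750 / 729))
  else   if i = 3 then ((-10) * x ^ 4 * α + (-380 / 3) * x ^ 2 * α + (-490 / 9) * α)
  else   if i = 4 then (15 * x ^ 8 + (1540 / 3) * x ^ 6 + (37450 / 9) * x ^ 4 + (-10) * x ^ 3 * β + (-4900 / 9) * x ^ 2 + 30 * x * β + (16391725 / 243))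
  else   if i = 5 then ((-18) * x ^ 2 * α + (-14 / 3) * α)
  else   if i = 6 then (20 * x ^ 6 + (1460 / 3) * x ^ 4 + (35420 / 9) * x ^ 2 + 10 * x * β + (798980 / 81))
  else   if i = 7 then (2 * α)
  else   if i = 8 then (15 * x ^ 4 + 190 * x ^ 2 + (1445 / 3))
  else   if i = 10 then (6 * x ^ 2 + (58 / 3))
  else   if i = 12 then (1)
  else 0

noncomputable def Gfun (α β : ℝ) : ℝ → ℝ → ℝ := fun x t =>
  F3 x t + 2 * α * t * P2 x t + 2 * β * x * Q2 x t
    + (α ^ 2 + β ^ 2) * (x ^ 2 + t ^ 2 + 1)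

lemma derivPE (n : ℕ) (c : ℕ → ℝ) (e : ℕ → ℕ) (x : ℝ) :
    deriv (fun y : ℝ => ∑ i ∈ Finset.range n, c i * y ^ e i) x
      = ∑ i ∈ Finset.range n, c i * ((e i : ℝ) * x ^ (e i - 1)) :=
  (HasDerivAt.fun_sum fun i _ => HasDerivAt.const_mul (c i) (hasDerivAt_pow (e i) x)).deriv

lemma hX0 (α β : ℝ) :
    Gfun α β = fun y s => ∑ i ∈ Finset.range 13, cXc α β s i * y ^ i := by
  funext y s
  simp only [Gfun, F3, P2, Q2, cXc, Finset.sum_range_succ, Finset.sum_range_zero]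
  norm_num
  ring

lemma hT0 (α β : ℝ) :
    Gfun α β = fun y s => ∑ j ∈ Finset.range 13, cTc α β y j * s ^ j := by
  funext y s
  simp only [Gfun, F3, P2, Q2, cTc, Finset.sum_range_succ, Finset.sum_range_zero]
  norm_num
  ring

lemma hX1 (α β : ℝ) :
    dX (Gfun α β) = fun y s => ∑ i ∈ Finset.range 13, cXc α β s i * (i : ℝ) * y ^ (i - 1) := by
  funext y s
  show deriv (fun x' => Gfun α β x' s) y = _
  have E : (fun x' => Gfun α β x' s)
      = fun x' => ∑ i ∈ Finset.range 13, cXc α β s i * x' ^ (i) := by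
    funext x'; rw [hX0 α β]
  rw [E]
  refine (derivPE 13 (fun i => cXc α β s i) (fun i => i) y).trans ?_
  exact Finset.sum_congr rfl fun i _ => by ring

lemma hX2 (α β : ℝ) :
    dX (dX (Gfun α β)) = fun y s => ∑ i ∈ Finset.range 13, cXc α β s i * (i : ℝ) * ((i - 1 : ℕ) : ℝ) * y ^ (i - 1 - 1) := by
  funext y s
  show deriv (fun x' => dX (Gfun α β) x' s) y = _
  have E : (fun x' => dX (Gfun α β) x' s)
      = fun x' => ∑ i ∈ Finset.range 13, cXc α β s i * (i : ℝ) * x' ^ (i - 1) := by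
    funext x'; rw [hX1 α β]
  rw [E]
  refine (derivPE 13 (fun i => cXc α β s i * (i : ℝ)) (fun i => i - 1) y).trans ?_
  exact Finset.sum_congr rfl fun i _ => by ring

lemma hX3 (α β : ℝ) :
    dX (dX (dX (Gfun α β))) = fun y s => ∑ i ∈ Finset.range 13, cXc α β s i * (i : ℝ) * ((i - 1 : ℕ) : ℝ) * ((i - 1 - 1 : ℕ) : ℝ) * y ^ (i - 1 - 1 - 1) := by
  funext y s
  show deriv (fun x' => dX (dX (Gfun α β)) x' s) y = _
  have E : (fun x' => dX (dX (Gfun α β)) x' s)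
      = fun x' => ∑ i ∈ Finset.range 13, cXc α β s i * (i : ℝ) * ((i - 1 : ℕ) : ℝ) * x' ^ (i - 1 - 1) := by
    funext x'; rw [hX2 α β]
  rw [E]
  refine (derivPE 13 (fun i => cXc α β s i * (i : ℝ) * ((i - 1 : ℕ) : ℝ)) (fun i => i - 1 - 1) y).trans ?_
  exact Finset.sum_congr rfl fun i _ => by ring

lemma hX4 (α β : ℝ) :
    dX (dX (dX (dX (Gfun α β)))) = fun y s => ∑ i ∈ Finset.range 13, cXc α β s i * (i : ℝ) * ((i - 1 : ℕ) : ℝ) * ((i - 1 - 1 : ℕ) : ℝ) * ((i - 1 - 1 - 1 : ℕ) : ℝ) * y ^ (i - 1 - 1 - 1 - 1) := by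
  funext y s
  show deriv (fun x' => dX (dX (dX (Gfun α β))) x' s) y = _
  have E : (fun x' => dX (dX (dX (Gfun α β))) x' s)
      = fun x' => ∑ i ∈ Finset.range 13, cXc α β s i * (i : ℝ) * ((i - 1 : ℕ) : ℝ) * ((i - 1 - 1 : ℕ) : ℝ) * x' ^ (i - 1 - 1 - 1) := by
    funext x'; rw [hX3 α β]
  rw [E]
  refine (derivPE 13 (fun i => cXc α β s i * (i : ℝ) * ((i - 1 : ℕ) : ℝ) * ((i - 1 - 1 : ℕ) : ℝ)) (fun i => i - 1 - 1 - 1) y).trans ?_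
  exact Finset.sum_congr rfl fun i _ => by ring

lemma hT1 (α β : ℝ) :
    dT (Gfun α β) = fun y s => ∑ j ∈ Finset.range 13, cTc α β y j * (j : ℝ) * s ^ (j - 1) := by
  funext y s
  show deriv (fun t' => Gfun α β y t') s = _
  have E : (fun t' => Gfun α β y t')
      = fun t' => ∑ j ∈ Finset.range 13, cTc α β y j * t' ^ (j) := by
    funext t'; rw [hT0 α β]
  rw [E]
  refine (derivPE 13 (fun j => cTc α β y j) (fun j => j) s).trans ?_
  exact Finset.sum_congr rfl fun j _ => by ring

lemma hT2 (α β : ℝ) :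
    dT (dT (Gfun α β)) = fun y s => ∑ j ∈ Finset.range 13, cTc α β y j * (j : ℝ) * ((j - 1 : ℕ) : ℝ) * s ^ (j - 1 - 1) := by
  funext y s
  show deriv (fun t' => dT (Gfun α β) y t') s = _
  have E : (fun t' => dT (Gfun α β) y t')
      = fun t' => ∑ j ∈ Finset.range 13, cTc α β y j * (j : ℝ) * t' ^ (j - 1) := by
    funext t'; rw [hT1 α β]
  rw [E]
  refine (derivPE 13 (fun j => cTc α β y j * (j : ℝ)) (fun j => j - 1) s).trans ?_
  exact Finset.sum_congr rfl fun j _ => by ring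

lemma mainBQ (α β : ℝ) : IsBilinearBQSolution (Gfun α β) := by
  intro x t
  rw [hT2 α β, hT1 α β, hX4 α β, hX3 α β, hX2 α β, hX1 α β, hX0 α β]
  simp only [Finset.sum_range_succ, Finset.sum_range_zero, cXc, cTc]
  norm_num
  ring


theorem bilinear_F3_tilde (α β : ℝ) :
    IsBilinearBQSolution
      (fun x t => F3 x t + 2 * α * t * P2 x t + 2 * β * x * Q2 x t
        + (α ^ 2 + β ^ 2) * (x ^ 2 + t ^ 2 + 1)) := by
  exact mainBQ α β
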